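/- Let σ₀ be the real antisymmetric 4×4 matrix with entries σ₀^{02} = −1, σ₀^{13} = −1, σ₀^{20} = 1, σ₀^{31} = 1 and all other entries zero. Then the orbit of σ₀ under the rotation subgroup, i.e. the set { Λ_R σ₀ Λ_Rᵗ : R ∈ O(3) } where Λ_R = diag(1, R) ∈ GL(4,ℝ), equals the set of real antisymmetric 4×4 matrices σ with |e(σ)| = 1 and m(σ) = e(σ) or m(σ) = −e(σ). -/

import Mathlib

open Matrix

/-- The standard symplectic matrix `(0 -1; 1 0)` in 2×2 block form. -/
noncomputable def sigma0 : Matrix (Fin 4) (Fin 4) ℝ :=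
  !![0, 0, -1, 0; 0, 0, 0, -1; 1, 0, 0, 0; 0, 1, 0, 0]

/-- The electric part of an antisymmetric matrix. -/
noncomputable def elecPart (σ : Matrix (Fin 4) (Fin 4) ℝ) : EuclideanSpace ℝ (Fin 3) :=
  (WithLp.equiv 2 (Fin 3 → ℝ)).symm ![σ 0 1, σ 0 2, σ 0 3]

/-- The magnetic part of an antisymmetric matrix. -/
noncomputable def magPart (σ : Matrix (Fin 4) (Fin 4) ℝ) : EuclideanSpace ℝ (Fin 3) :=
  (WithLp.equiv 2 (Fin 3 → ℝ)).symm ![σ 2 3, σ 3 1, σ 1 2]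

/-- `Λ_R = diag(1, R)`, the rotation `R` embedded in `GL(4,ℝ)`. -/
noncomputable def rotBlock (R : Matrix (Fin 3) (Fin 3) ℝ) : Matrix (Fin 4) (Fin 4) ℝ :=
  Matrix.reindex finSumFinEquiv finSumFinEquiv
    (Matrix.fromBlocks (1 : Matrix (Fin 1) (Fin 1) ℝ) 0 0 R)

lemma rotBlock_eq (R : Matrix (Fin 3) (Fin 3) ℝ) :
    rotBlock R = !![1,0,0,0; 0,R 0 0,R 0 1,R 0 2; 0,R 1 0,R 1 1,R 1 2; 0,R 2 0,R 2 1,R 2 2] := by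
  ext i j
  fin_cases i <;> fin_cases j <;>
    simp [rotBlock, Matrix.fromBlocks, finSumFinEquiv] <;> rfl

lemma rotBlockT_eq (R : Matrix (Fin 3) (Fin 3) ℝ) :
    (rotBlock R)ᵀ = !![1,0,0,0; 0,R 0 0,R 1 0,R 2 0; 0,R 0 1,R 1 1,R 2 1; 0,R 0 2,R 1 2,R 2 2] := by
  ext i j
  fin_cases i <;> fin_cases j <;>
    simp [rotBlock, Matrix.fromBlocks, finSumFinEquiv, Matrix.transpose_apply] <;> rfl

lemma conj_eq (R : Matrix (Fin 3) (Fin 3) ℝ) :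
    rotBlock R * sigma0 * (rotBlock R)ᵀ =
    !![0, -R 0 1, -R 1 1, -R 2 1;
       R 0 1, 0, R 0 2 * R 1 0 - R 0 0 * R 1 2, R 0 2 * R 2 0 - R 0 0 * R 2 2;
       R 1 1, R 0 0 * R 1 2 - R 0 2 * R 1 0, 0, R 1 2 * R 2 0 - R 1 0 * R 2 2;
       R 2 1, R 0 0 * R 2 2 - R 0 2 * R 2 0, R 1 0 * R 2 2 - R 1 2 * R 2 0, 0] := by
  rw [rotBlockT_eq, rotBlock_eq]
  ext i j
  fin_cases i <;> fin_cases j <;>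
    (simp [sigma0, Matrix.mul_apply, Fin.sum_univ_four]; try ring) <;> first | rfl | (right; rfl)

lemma sigma0_anti : sigma0ᵀ = -sigma0 := by
  ext i j; fin_cases i <;> fin_cases j <;> norm_num [sigma0]

lemma conj_anti (R : Matrix (Fin 3) (Fin 3) ℝ) :
    (rotBlock R * sigma0 * (rotBlock R)ᵀ)ᵀ = -(rotBlock R * sigma0 * (rotBlock R)ᵀ) := by
  calc (rotBlock R * sigma0 * (rotBlock R)ᵀ)ᵀ
      = rotBlock R * sigma0ᵀ * (rotBlock R)ᵀ := by
        rw [Matrix.transpose_mul, Matrix.transpose_mul, Matrix.transpose_transpose,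
          Matrix.mul_assoc]
    _ = -(rotBlock R * sigma0 * (rotBlock R)ᵀ) := by
        rw [sigma0_anti, Matrix.mul_neg, Matrix.neg_mul]

lemma elec_conj_apply (R : Matrix (Fin 3) (Fin 3) ℝ) (i : Fin 3) :
    elecPart (rotBlock R * sigma0 * (rotBlock R)ᵀ) i = -(R i 1) := by
  fin_cases i <;> simp [elecPart, conj_eq, WithLp.equiv_symm_apply, PiLp.toLp_apply]

lemma adj_eq (R : Matrix (Fin 3) (Fin 3) ℝ) (h : Rᵀ * R = 1) :
    adjugate R = det R • Rᵀ := by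
  have h2 : R * Rᵀ = 1 := mul_eq_one_comm.mp h
  calc adjugate R = adjugate R * (R * Rᵀ) := by rw [h2, mul_one]
    _ = (adjugate R * R) * Rᵀ := by rw [Matrix.mul_assoc]
    _ = det R • Rᵀ := by rw [Matrix.adjugate_mul, Matrix.smul_mul, Matrix.one_mul]

lemma mag_conj_apply (R : Matrix (Fin 3) (Fin 3) ℝ) (h : Rᵀ * R = 1) (i : Fin 3) :
    magPart (rotBlock R * sigma0 * (rotBlock R)ᵀ) i = det R * R i 1 := by
  have hadj := adj_eq R h
  rw [Matrix.adjugate_fin_three] at hadj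
  have h0 := congrFun (congrFun hadj 1) 0
  have h1 := congrFun (congrFun hadj 1) 1
  have h2 := congrFun (congrFun hadj 1) 2
  simp [Matrix.smul_apply, Matrix.transpose_apply] at h0 h1 h2
  fin_cases i <;>
    simp [magPart, conj_eq, WithLp.equiv_symm_apply, PiLp.toLp_apply] <;> linarith

lemma norm_elec_conj (R : Matrix (Fin 3) (Fin 3) ℝ) (h : Rᵀ * R = 1) :
    ‖elecPart (rotBlock R * sigma0 * (rotBlock R)ᵀ)‖ = 1 := by
  have h11 := congrFun (congrFun h 1) 1
  simp [Matrix.mul_apply, Fin.sum_univ_three, Matrix.one_apply, Matrix.transpose_apply] at h11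
  rw [EuclideanSpace.norm_eq]
  have key : ∀ i : Fin 3, ‖elecPart (rotBlock R * sigma0 * (rotBlock R)ᵀ) i‖ ^ 2
      = R i 1 * R i 1 := by
    intro i
    rw [elec_conj_apply, Real.norm_eq_abs, sq_abs]
    ring
  rw [Fin.sum_univ_three, key 0, key 1, key 2, h11, Real.sqrt_one]

lemma eq_of_parts {σ τ : Matrix (Fin 4) (Fin 4) ℝ} (hσ : σᵀ = -σ) (hτ : τᵀ = -τ)
    (he : elecPart σ = elecPart τ) (hm : magPart σ = magPart τ) : σ = τ := by
  have aσ : ∀ i j : Fin 4, σ j i = -σ i j := fun i j => congrFun (congrFun hσ i) j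
  have aτ : ∀ i j : Fin 4, τ j i = -τ i j := fun i j => congrFun (congrFun hτ i) j
  have e0 : σ 0 1 = τ 0 1 := by have := congrArg (fun v : EuclideanSpace ℝ (Fin 3) => v 0) he; exact this
  have e1 : σ 0 2 = τ 0 2 := by have := congrArg (fun v : EuclideanSpace ℝ (Fin 3) => v 1) he; exact this
  have e2 : σ 0 3 = τ 0 3 := by have := congrArg (fun v : EuclideanSpace ℝ (Fin 3) => v 2) he; exact this
  have m0 : σ 2 3 = τ 2 3 := by have := congrArg (fun v : EuclideanSpace ℝ (Fin 3) => v 0) hm; exact this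
  have m1 : σ 3 1 = τ 3 1 := by have := congrArg (fun v : EuclideanSpace ℝ (Fin 3) => v 1) hm; exact this
  have m2 : σ 1 2 = τ 1 2 := by have := congrArg (fun v : EuclideanSpace ℝ (Fin 3) => v 2) hm; exact this
  ext i j
  fin_cases i <;> fin_cases j <;>
    first
      | exact e0 | exact e1 | exact e2 | exact m0 | exact m1 | exact m2
      | (show σ 0 0 = τ 0 0; linarith [aσ 0 0, aτ 0 0])
      | (show σ 1 1 = τ 1 1; linarith [aσ 1 1, aτ 1 1])
      | (show σ 2 2 = τ 2 2; linarith [aσ 2 2, aτ 2 2])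
      | (show σ 3 3 = τ 3 3; linarith [aσ 3 3, aτ 3 3])
      | (show σ 1 0 = τ 1 0; linarith [aσ 0 1, aτ 0 1])
      | (show σ 2 0 = τ 2 0; linarith [aσ 0 2, aτ 0 2])
      | (show σ 3 0 = τ 3 0; linarith [aσ 0 3, aτ 0 3])
      | (show σ 3 2 = τ 3 2; linarith [aσ 2 3, aτ 2 3])
      | (show σ 1 3 = τ 1 3; linarith [aσ 3 1, aτ 3 1])
      | (show σ 2 1 = τ 2 1; linarith [aσ 1 2, aτ 1 2])

lemma exists_rot (u : EuclideanSpace ℝ (Fin 3)) (hu : ‖u‖ = 1) (s : ℝ) (hs : s = 1 ∨ s = -1) :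
    ∃ R : Matrix (Fin 3) (Fin 3) ℝ, Rᵀ * R = 1 ∧ R.det = s ∧ ∀ i, R i 1 = u i := by
  have horth : Orthonormal ℝ (({1} : Set (Fin 3)).restrict (fun _ => u)) := by
    constructor
    · intro i; exact hu
    · intro i j hij
      exact absurd (Subtype.ext ((Set.mem_singleton_iff.mp i.2).trans
        (Set.mem_singleton_iff.mp j.2).symm)) hij
  obtain ⟨b, hb⟩ := horth.exists_orthonormalBasis_extension_of_card_eq (by simp)
  have hb1 : b 1 = u := hb 1 rfl
  set R₀ : Matrix (Fin 3) (Fin 3) ℝ := Matrix.of fun i j => b j i with hR₀def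
  have hR₀ : R₀ᵀ * R₀ = 1 := by
    ext j k
    have h := orthonormal_iff_ite.mp b.orthonormal j k
    rw [PiLp.inner_apply] at h
    simpa [Matrix.mul_apply, Matrix.one_apply, hR₀def, mul_comm] using h
  have hdet2 : R₀.det * R₀.det = 1 := by
    have := congrArg Matrix.det hR₀
    rwa [Matrix.det_mul, Matrix.det_transpose, Matrix.det_one] at this
  have hdet : R₀.det = 1 ∨ R₀.det = -1 := mul_self_eq_one_iff.mp hdet2
  by_cases hc : R₀.det = s
  · exact ⟨R₀, hR₀, hc, fun i => by have := congrArg (fun v : EuclideanSpace ℝ (Fin 3) => v i) hb1; exact this⟩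
  · set D : Matrix (Fin 3) (Fin 3) ℝ := !![(-1:ℝ),0,0;0,1,0;0,0,1] with hD
    refine ⟨R₀ * D, ?_, ?_, ?_⟩
    · have hDD : Dᵀ * D = 1 := by
        ext i j; fin_cases i <;> fin_cases j <;>
          simp [hD, Matrix.mul_apply, Fin.sum_univ_three, Matrix.one_apply,
            Matrix.vecHead, Matrix.vecTail]
      rw [Matrix.transpose_mul, Matrix.mul_assoc, ← Matrix.mul_assoc R₀ᵀ, hR₀,
        Matrix.one_mul, hDD]
    · have hdD : D.det = -1 := by simp [hD, Matrix.det_fin_three]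
      rw [Matrix.det_mul, hdD]
      rcases hdet with h | h <;> rcases hs with h' | h' <;> simp_all
    · intro i
      have hmul : (R₀ * D) i 1 = R₀ i 1 := by
        simp [hD, Matrix.mul_apply, Fin.sum_univ_three]
      rw [hmul]; have := congrArg (fun v : EuclideanSpace ℝ (Fin 3) => v i) hb1; exact this

theorem rotation_orbit_of_sigma0 :
    {σ : Matrix (Fin 4) (Fin 4) ℝ |
        ∃ R : Matrix (Fin 3) (Fin 3) ℝ, Rᵀ * R = 1 ∧
          σ = rotBlock R * sigma0 * (rotBlock R)ᵀ} =
    {σ : Matrix (Fin 4) (Fin 4) ℝ | σᵀ = -σ ∧ ‖elecPart σ‖ = 1 ∧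
        (magPart σ = elecPart σ ∨ magPart σ = -elecPart σ)} := by
  ext σ
  simp only [Set.mem_setOf_eq]
  constructor
  · rintro ⟨R, hR, rfl⟩
    refine ⟨conj_anti R, norm_elec_conj R hR, ?_⟩
    have hdet2 : R.det * R.det = 1 := by
      have := congrArg Matrix.det hR
      rwa [Matrix.det_mul, Matrix.det_transpose, Matrix.det_one] at this
    rcases mul_self_eq_one_iff.mp hdet2 with h | h
    · right
      ext i
      have := mag_conj_apply R hR i
      rw [h, one_mul] at this
      rw [this]
      have he := elec_conj_apply R i
      show R i 1 = -(elecPart (rotBlock R * sigma0 * (rotBlock R)ᵀ) i)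
      rw [he]; ring
    · left
      ext i
      have := mag_conj_apply R hR i
      rw [h] at this
      rw [this, elec_conj_apply R i]; ring
  · rintro ⟨hanti, hnorm, hm | hm⟩
    · -- magPart σ = elecPart σ : need det = -1
      obtain ⟨R, hR, hdet, hcol⟩ := exists_rot (-(elecPart σ))
        (by rw [norm_neg]; exact hnorm) (-1) (Or.inr rfl)
      refine ⟨R, hR, ?_⟩
      refine eq_of_parts hanti (conj_anti R) ?_ ?_
      · ext i
        rw [elec_conj_apply R i, hcol i]
        show elecPart σ i = -(-(elecPart σ) i)
        simp
      · ext i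
        rw [mag_conj_apply R hR i, hdet, hcol i, hm]
        show elecPart σ i = -1 * (-(elecPart σ) i)
        simp
    · -- magPart σ = -elecPart σ : need det = 1
      obtain ⟨R, hR, hdet, hcol⟩ := exists_rot (-(elecPart σ))
        (by rw [norm_neg]; exact hnorm) 1 (Or.inl rfl)
      refine ⟨R, hR, ?_⟩
      refine eq_of_parts hanti (conj_anti R) ?_ ?_
      · ext i
        rw [elec_conj_apply R i, hcol i]
        show elecPart σ i = -(-(elecPart σ) i)
        simp
      · ext i
        rw [mag_conj_apply R hR i, hdet, hcol i, hm]
        show (-(elecPart σ)) i = 1 * (-(elecPart σ) i)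
        simp
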